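/- arXiv:1702.04308 — 3 statements merged into one kernel-verified Lean document; each statement's English description precedes it below -/
import Mathlib

section
/- Let G = (V, E, s, r) be a countable directed graph and v ∈ V. The model TCK family (P^v, S^v) on H_{G,v} is irreducible: the only closed subspaces of H_{G,v} that are invariant under every operator P^v_w (w ∈ V), S^v_e (e ∈ E) and their adjoints are {0} and H_{G,v}. -/
noncomputable section

open scoped ENNReal InnerProductSpace ComplexOrder
open ContinuousLinearMap

attribute [local instance] Classical.propDecidable

namespace GraphPaper

/-! ### Positivity of operators (without completeness assumptions) -/

/-- A bounded operator on a complex inner product space is positive if all the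
inner products `⟪T x, x⟫` are nonnegative (this forces them to be real). -/
def IsPosOp {W : Type*} [NormedAddCommGroup W] [InnerProductSpace ℂ W]
    (T : W →L[ℂ] W) : Prop :=
  ∀ x : W, 0 ≤ (inner ℂ (T x) x : ℂ)

/-! ### Toeplitz-Cuntz-Krieger families -/

variable {V E : Type*}

variable {H : Type*} [NormedAddCommGroup H] [InnerProductSpace ℂ H] [CompleteSpace H]

/-- The Toeplitz-Cuntz-Krieger relations for a family of projections `P` indexed by
vertices and partial isometries `S` indexed by edges. -/
def IsTCK (s r : E → V) (P : V → H →L[ℂ] H) (S : E → H →L[ℂ] H) : Prop :=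
  (∀ v, adjoint (P v) = P v) ∧
  (∀ v, P v ∘L P v = P v) ∧
  (∀ v w, v ≠ w → P v ∘L P w = 0) ∧
  (∀ e, adjoint (S e) ∘L S e = P (s e)) ∧
  (∀ (v : V) (F : Finset E), (∀ e ∈ F, r e = v) →
    IsPosOp (P v - ∑ e ∈ F, S e ∘L adjoint (S e)))

/-- A TCK family is a full Cuntz-Krieger family if for every vertex `v` receiving at
least one edge, the (unconditionally convergent) sum `∑_{r(e) = v} S_e S_e* x` is `P_v x`. -/
def IsFullCK (s r : E → V) (P : V → H →L[ℂ] H) (S : E → H →L[ℂ] H) : Prop :=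
  ∀ v : V, (∃ e, r e = v) → ∀ x : H,
    HasSum (fun e : {e : E // r e = v} => S e.1 (adjoint (S e.1) x)) (P v x)

/-- A TCK family is a Cuntz-Krieger family if `∑_{r(e) = v} S_e S_e* = P_v` for every
vertex `v` receiving finitely many and at least one edge. -/
def IsCK (s r : E → V) (P : V → H →L[ℂ] H) (S : E → H →L[ℂ] H) : Prop :=
  IsTCK s r P S ∧
  ∀ (v : V) (hfin : {e : E | r e = v}.Finite), hfin.toFinset.Nonempty →
    ∑ e ∈ hfin.toFinset, S e ∘L adjoint (S e) = P v

/-- The generators of a TCK family, indexed by vertices and edges. -/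
def gen (P : V → H →L[ℂ] H) (S : E → H →L[ℂ] H) : V ⊕ E → H →L[ℂ] H :=
  Sum.elim P S

variable {K : Type*} [NormedAddCommGroup K] [InnerProductSpace ℂ K] [CompleteSpace K]

/-- `(Q, T)` on `K` dilates `(P, S)` on `H` via the isometry `W : H → K`:
compressions of arbitrary nonempty words in the generators agree. -/
def Dilates (P : V → H →L[ℂ] H) (S : E → H →L[ℂ] H)
    (Q : V → K →L[ℂ] K) (T : E → K →L[ℂ] K) (W : H →L[ℂ] K) : Prop :=
  (∀ x : H, ‖W x‖ = ‖x‖) ∧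
  ∀ l : List (V ⊕ E), l ≠ [] →
    adjoint W ∘L (l.map (gen Q T)).prod ∘L W = (l.map (gen P S)).prod

/-! ### Finite paths -/

/-- A finite path `λ = e_n ⋯ e_1` in the directed graph determined by the source and
range maps `s r : E → V`, together with a base vertex `src` which is the source of the
path.  The edges are listed as `[e_n, …, e_1]`, with the consecutive compatibility
`s (e_{i+1}) = r (e_i)`, and (when the path is nonempty) `s (e_1) = src`.
A path with no edges is the length-zero path at the vertex `src`. -/
structure GPath (s r : E → V) : Type _ where
  src : V
  edges : List E
  chain : edges.Chain' fun e f => s e = r f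
  src_eq : ∀ e ∈ edges.getLast?, s e = src

variable {s r : E → V}

/-- The range of a finite path. -/
def GPath.rng (p : GPath s r) : V := ((p.edges.head?).map r).getD p.src

theorem GPath.ext' {p q : GPath s r} (h1 : p.src = q.src) (h2 : p.edges = q.edges) :
    p = q := by
  cases p; cases q; simp_all

/-- The length-zero path at a vertex. -/
def GPath.nil (s r : E → V) (v : V) : GPath s r where
  src := v
  edges := []
  chain := List.isChain_nil
  src_eq := by simp

/-- The tail of a path (removing the first, i.e. last-applied, edge). -/
def GPath.tail (p : GPath s r) : GPath s r where
  src := p.src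
  edges := p.edges.tail
  chain := p.chain.tail
  src_eq := by
    intro f hf
    apply p.src_eq
    rcases hp : p.edges with - | ⟨a, t⟩
    · rw [hp] at hf; simp at hf
    · rw [hp] at hf
      rcases t with - | ⟨b, t'⟩
      · simp at hf
      · simpa [List.getLast?_cons_cons] using hf

/-- The operator `T_λ = T_{e_n} ⋯ T_{e_1}` associated to a finite path `λ`;
for the length-zero path at `v` it is `P_v`. -/
def pathOp (P : V → H →L[ℂ] H) (S : E → H →L[ℂ] H) (p : GPath s r) : H →L[ℂ] H :=
  if p.edges.isEmpty then P p.src else (p.edges.map S).prod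

/-- Paths with source `v`. -/
abbrev SPath (s r : E → V) (v : V) : Type _ := {p : GPath s r // p.src = v}

/-! ### The model space and the model TCK family -/

/-- The model Hilbert space `H_{G,v} = ℓ²` of the set of paths with source `v`. -/
abbrev HGv (s r : E → V) (v : V) : Type _ := lp (fun _ : SPath s r v => ℂ) 2

/-- The basis vector `ξ_λ` of the model space. -/
def xi {v : V} (p : SPath s r v) : HGv s r v := lp.single 2 p 1

/-- Pulling back a function `x : ι → ℂ` along a partially defined map `f`. -/
def pullFun {ι κ : Type*} (f : κ → Option ι) (x : ι → ℂ) (k : κ) : ℂ :=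
  ((f k).map x).getD 0

theorem pullFun_core {ι κ : Type*} (f : κ → Option ι)
    (hf : ∀ ⦃k k' : κ⦄ ⦃i : ι⦄, f k = some i → f k' = some i → k = k')
    (x : lp (fun _ : ι => ℂ) 2) :
    Memℓp (pullFun f ⇑x) 2 ∧
      ∑' k : κ, ‖pullFun f ⇑x k‖ ^ (2 : ℝ) ≤ ∑' i : ι, ‖x i‖ ^ (2 : ℝ) := by
  classical
  have hp : 0 < (2 : ℝ≥0∞).toReal := by norm_num
  have hx : Summable fun i : ι => ‖x i‖ ^ (2 : ℝ) := by
    have := lp.memℓp x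
    rw [memℓp_gen_iff hp] at this
    simpa using this
  set σ : Set κ := {k : κ | (f k).isSome} with hσ
  have hmem : ∀ k : σ, ∃ i, f (k : κ) = some i := fun k => Option.isSome_iff_exists.mp k.2
  set h : σ → ι := fun k => (f (k : κ)).get k.2 with hh
  have hfk : ∀ k : σ, f (k : κ) = some (h k) := fun k => (Option.some_get k.2).symm
  have hinj : Function.Injective h := by
    intro a b hab
    have ha := hfk a
    have hb := hfk b
    rw [hab] at ha
    exact Subtype.ext (hf ha hb)
  have hval : ∀ k : σ, pullFun f ⇑x (k : κ) = x (h k) := by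
    intro k
    simp [pullFun, hfk k]
  set g : κ → ℝ := fun k => ‖pullFun f ⇑x k‖ ^ (2 : ℝ) with hg
  have hsupp : Function.support g ⊆ σ := by
    intro k hk
    by_contra hks
    have : f k = none := by
      rw [hσ] at hks
      simpa [Option.isNone_iff_eq_none, Option.not_isSome_iff_eq_none] using hks
    apply hk
    simp [hg, pullFun, this, Real.zero_rpow (by norm_num : (2:ℝ) ≠ 0)]
  have hcomp : (g ∘ (Subtype.val : σ → κ)) = (fun i => ‖x i‖ ^ (2 : ℝ)) ∘ h := by
    funext k
    simp [hg, Function.comp, hval k]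
  have hsummσ : Summable (g ∘ (Subtype.val : σ → κ)) := by
    rw [hcomp]; exact hx.comp_injective hinj
  have hsumm : Summable g := by
    obtain ⟨a, ha⟩ := hsummσ
    exact ⟨a, (hasSum_subtype_iff_of_support_subset hsupp).mp ha⟩
  constructor
  · apply memℓp_gen
    have : (fun k => ‖pullFun f ⇑x k‖ ^ (2 : ℝ≥0∞).toReal) = g := by
      funext k; simp [hg]
    rw [this]
    exact hsumm
  · have h1 : ∑' k : κ, g k = ∑' k : σ, g k := (tsum_subtype_eq_of_support_subset hsupp).symm
    have h2 : ∑' k : σ, g k ≤ ∑' i : ι, ‖x i‖ ^ (2 : ℝ) := by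
      have := tsum_comp_le_tsum_of_inj hx
        (fun i => Real.rpow_nonneg (norm_nonneg _) _) hinj
      calc ∑' k : σ, g k = ∑' k : σ, ((fun i => ‖x i‖ ^ (2 : ℝ)) ∘ h) k := by
            rw [← hcomp]; rfl
        _ ≤ ∑' i : ι, ‖x i‖ ^ (2 : ℝ) := this
    exact h1.trans_le h2

/-- The bounded operator `lp² ι → lp² κ` induced by a partially defined injection. -/
def pullCLM {ι κ : Type*} (f : κ → Option ι)
    (hf : ∀ ⦃k k' : κ⦄ ⦃i : ι⦄, f k = some i → f k' = some i → k = k') :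
    lp (fun _ : ι => ℂ) 2 →L[ℂ] lp (fun _ : κ => ℂ) 2 :=
  LinearMap.mkContinuous
    { toFun := fun x => ⟨pullFun f ⇑x, (pullFun_core f hf x).1⟩
      map_add' := by
        intro x y
        apply lp.ext
        funext k
        show pullFun f ⇑(x + y) k = pullFun f ⇑x k + pullFun f ⇑y k
        rw [lp.coeFn_add]
        unfold pullFun
        cases f k <;> simp
      map_smul' := by
        intro c x
        apply lp.ext
        funext k
        show pullFun f ⇑(c • x) k = c • pullFun f ⇑x k
        rw [lp.coeFn_smul]
        unfold pullFun
        cases f k <;> simp }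
    1
    (by
      intro x
      have hp : 0 < (2 : ℝ≥0∞).toReal := by norm_num
      rw [one_mul]
      set y : lp (fun _ : κ => ℂ) 2 := ⟨pullFun f ⇑x, (pullFun_core f hf x).1⟩ with hy
      show ‖y‖ ≤ ‖x‖
      have hle := (pullFun_core f hf x).2
      have h1 : ‖y‖ ^ (2:ℝ) = ∑' k : κ, ‖pullFun f ⇑x k‖ ^ (2 : ℝ) := by
        simpa using lp.norm_rpow_eq_tsum hp y
      have h2 : ‖x‖ ^ (2:ℝ) = ∑' i : ι, ‖x i‖ ^ (2 : ℝ) := by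
        simpa using lp.norm_rpow_eq_tsum hp x
      have key : ‖y‖ ^ (2:ℝ) ≤ ‖x‖ ^ (2:ℝ) := by rw [h1, h2]; exact hle
      have k2 : ‖y‖ ^ (2:ℕ) ≤ ‖x‖ ^ (2:ℕ) := by
        rw [← Real.rpow_natCast ‖y‖ 2, ← Real.rpow_natCast ‖x‖ 2]
        exact_mod_cast key
      have hs := Real.sqrt_le_sqrt k2
      rwa [Real.sqrt_sq (norm_nonneg y), Real.sqrt_sq (norm_nonneg x)] at hs)

/-- Decoding map for the model projection at `w`. -/
def decodeP (v w : V) (p : SPath s r v) : Option (SPath s r v) :=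
  if p.1.rng = w then some p else none

/-- Decoding map for the model partial isometry at `e`. -/
def decodeS (v : V) (e : E) (p : SPath s r v) : Option (SPath s r v) :=
  if p.1.edges.head? = some e then some ⟨p.1.tail, p.2⟩ else none

theorem decodeP_inj (v w : V) :
    ∀ ⦃k k' : SPath s r v⦄ ⦃i : SPath s r v⦄,
      decodeP v w k = some i → decodeP v w k' = some i → k = k' := by
  intro k k' i h1 h2
  unfold decodeP at h1 h2
  split_ifs at h1 h2 <;> simp_all

theorem decodeS_inj (v : V) (e : E) :
    ∀ ⦃k k' : SPath s r v⦄ ⦃i : SPath s r v⦄,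
      decodeS v e k = some i → decodeS v e k' = some i → k = k' := by
  intro k k' i h1 h2
  unfold decodeS at h1 h2
  split_ifs at h1 h2 with he1 he2
  have hi1 := Option.some.inj h1
  have hi2 := Option.some.inj h2
  apply Subtype.ext
  apply GPath.ext'
  · rw [k.2, k'.2]
  · obtain ⟨t1, ht1⟩ := List.head?_eq_some_iff.mp he1
    obtain ⟨t2, ht2⟩ := List.head?_eq_some_iff.mp he2
    have e1 : k.1.tail.edges = t1 := by simp [GPath.tail, ht1]
    have e2 : k'.1.tail.edges = t2 := by simp [GPath.tail, ht2]
    have : k.1.tail.edges = k'.1.tail.edges := by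
      rw [show k.1.tail = i.1 from congrArg Subtype.val hi1,
        show k'.1.tail = i.1 from congrArg Subtype.val hi2]
    rw [ht1, ht2]
    rw [e1, e2] at this
    rw [this]

/-- The model projection `P^v_w` on `H_{G,v}`: the orthogonal projection onto the span
of the basis vectors `ξ_λ` with `r(λ) = w`. -/
def modelP (s r : E → V) (v w : V) : HGv s r v →L[ℂ] HGv s r v :=
  pullCLM (decodeP v w) (decodeP_inj v w)

/-- The model partial isometry `S^v_e` on `H_{G,v}`: it maps `ξ_λ` to `ξ_{eλ}`
when `s(e) = r(λ)`, and to `0` otherwise. -/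
def modelS (s r : E → V) (v : V) (e : E) : HGv s r v →L[ℂ] HGv s r v :=
  pullCLM (decodeS v e) (decodeS_inj v e)

/-! ### Reducing subspaces, wandering spaces, maximality -/

universe u

/-- A subspace is reducing for a family of operators if it is invariant under all of them
and all their adjoints. -/
def Reduces (Q : V → H →L[ℂ] H) (T : E → H →L[ℂ] H) (M : Submodule ℂ H) : Prop :=
  (∀ w : V, ∀ x ∈ M, Q w x ∈ M ∧ adjoint (Q w) x ∈ M) ∧
  (∀ e : E, ∀ x ∈ M, T e x ∈ M ∧ adjoint (T e) x ∈ M)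

/-- The wandering space `W_v = {x | Q_v x = x, T_e* x = 0 for all e ∈ r⁻¹(v)}`. -/
def wandering (s r : E → V) (Q : V → H →L[ℂ] H) (T : E → H →L[ℂ] H) (v : V) :
    Submodule ℂ H where
  carrier := {x : H | Q v x = x ∧ ∀ e : E, r e = v → adjoint (T e) x = 0}
  add_mem' := by
    intro a b ha hb
    refine ⟨?_, fun e he => ?_⟩
    · rw [map_add, ha.1, hb.1]
    · rw [map_add, ha.2 e he, hb.2 e he, add_zero]
  zero_mem' := ⟨map_zero _, fun e _ => map_zero _⟩
  smul_mem' := by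
    intro c x hx
    refine ⟨?_, fun e he => ?_⟩
    · rw [map_smul, hx.1]
    · rw [map_smul, hx.2 e he, smul_zero]

/-- The restriction of a TCK family to a reducing subspace `M` is a full Cuntz-Krieger
family (expressed via the action on vectors of `M` in the ambient space). -/
def IsFullCKOn (s r : E → V) (Q : V → H →L[ℂ] H) (T : E → H →L[ℂ] H)
    (M : Submodule ℂ H) : Prop :=
  ∀ v : V, (∃ e, r e = v) → ∀ x ∈ M,
    HasSum (fun e : {e : E // r e = v} => T e.1 (adjoint (T e.1) x)) (Q v x)

/-- A TCK family is maximal if for every TCK family dilating it, the range of the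
dilation isometry is reducing. -/
def IsMaxTCK {V E : Type*} (s r : E → V) {H : Type u} [NormedAddCommGroup H]
    [InnerProductSpace ℂ H] [CompleteSpace H]
    (P : V → H →L[ℂ] H) (S : E → H →L[ℂ] H) : Prop :=
  ∀ (K : Type u) [NormedAddCommGroup K] [InnerProductSpace ℂ K] [CompleteSpace K],
    ∀ (Q : V → K →L[ℂ] K) (T : E → K →L[ℂ] K) (W : H →L[ℂ] K),
      IsTCK s r Q T → Dilates P S Q T W →
        ∀ (g : V ⊕ E) (x : H),
          gen Q T g (W x) ∈ Set.range W ∧ adjoint (gen Q T g) (W x) ∈ Set.range W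

end GraphPaper

namespace GraphPaper


section Aux

variable {V E : Type*} {s r : E → V} {v : V}

theorem pullCLM_apply {ι κ : Type*} (f : κ → Option ι)
    (hf : ∀ ⦃k k' : κ⦄ ⦃i : ι⦄, f k = some i → f k' = some i → k = k')
    (x : lp (fun _ : ι => ℂ) 2) (k : κ) :
    pullCLM f hf x k = pullFun f ⇑x k := rfl

theorem pullCLM_norm_le {ι κ : Type*} (f : κ → Option ι)
    (hf : ∀ ⦃k k' : κ⦄ ⦃i : ι⦄, f k = some i → f k' = some i → k = k')
    (x : lp (fun _ : ι => ℂ) 2) :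
    ‖pullCLM f hf x‖ ≤ ‖x‖ := by
  have h1 : ‖pullCLM f hf‖ ≤ 1 :=
    LinearMap.mkContinuous_norm_le _ zero_le_one _
  calc ‖pullCLM f hf x‖ ≤ ‖pullCLM f hf‖ * ‖x‖ := (pullCLM f hf).le_opNorm x
    _ ≤ 1 * ‖x‖ := by gcongr
    _ = ‖x‖ := one_mul _

theorem inner_xi_left (q : SPath s r v) (x : HGv s r v) :
    (inner ℂ (xi q) x : ℂ) = x q := by
  rw [xi, lp.inner_single_left]
  simp [RCLike.inner_apply]

/-- Prepending an edge to a path. -/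
def GPath.cons (e : E) (p : GPath s r) (h : s e = p.rng) : GPath s r where
  src := p.src
  edges := e :: p.edges
  chain := by
    rcases hp : p.edges with - | ⟨f, t⟩
    · exact List.isChain_singleton _
    · refine List.isChain_cons_cons.mpr ⟨?_, hp ▸ p.chain⟩
      have : p.rng = r f := by simp [GPath.rng, hp]
      rw [h, this]
  src_eq := by
    intro f hf
    rcases hp : p.edges with - | ⟨a, t⟩
    · rw [hp] at hf; simp at hf
      subst hf
      have : p.rng = p.src := by simp [GPath.rng, hp]
      rw [h, this]
    · apply p.src_eq
      rw [hp] at hf ⊢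
      simpa [List.getLast?_cons_cons] using hf

@[simp] theorem GPath.cons_src (e : E) (p : GPath s r) (h : s e = p.rng) :
    (GPath.cons e p h).src = p.src := rfl

@[simp] theorem GPath.cons_edges (e : E) (p : GPath s r) (h : s e = p.rng) :
    (GPath.cons e p h).edges = e :: p.edges := rfl

theorem GPath.head_compat (p : GPath s r) {e : E} (he : p.edges.head? = some e) :
    s e = p.tail.rng := by
  obtain ⟨t, ht⟩ := List.head?_eq_some_iff.mp he
  rcases t with - | ⟨f, t'⟩
  · have := p.src_eq e (by rw [ht]; simp)
    simp [GPath.tail, GPath.rng, ht, this]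
  · have hch := p.chain
    rw [ht] at hch
    have : s e = r f := (List.isChain_cons_cons.mp hch).1
    simp [GPath.tail, GPath.rng, ht, this]

theorem GPath.cons_tail (p : GPath s r) {e : E} (he : p.edges.head? = some e)
    (h : s e = p.tail.rng) : GPath.cons e p.tail h = p := by
  obtain ⟨t, ht⟩ := List.head?_eq_some_iff.mp he
  apply GPath.ext'
  · rfl
  · simp [GPath.tail, ht]

theorem modelS_xi (e : E) (q : SPath s r v) (h : s e = q.1.rng) :
    modelS s r v e (xi q) = xi ⟨GPath.cons e q.1 h, q.2⟩ := by
  apply lp.ext; funext p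
  show pullFun (decodeS v e) (⇑(xi q)) p = _
  unfold pullFun decodeS
  simp only [xi]
  by_cases hpe : p.1.edges.head? = some e
  · rw [if_pos hpe]
    simp only [Option.map_some, Option.getD_some]
    by_cases hpq : (⟨p.1.tail, p.2⟩ : SPath s r v) = q
    · have hq : p.1.tail = q.1 := congrArg Subtype.val hpq
      have hedge : p.1.edges = e :: q.1.edges := by
        obtain ⟨t, ht⟩ := List.head?_eq_some_iff.mp hpe
        rw [← hq]
        simp [GPath.tail, ht]
      have hpc : p = ⟨GPath.cons e q.1 h, q.2⟩ :=
        Subtype.ext (GPath.ext' (p := GPath.cons e q.1 h) (q := p.1)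
          (q.2.trans p.2.symm) hedge.symm).symm
      rw [hpq, lp.single_apply_self, hpc, lp.single_apply_self]
    · have hne : p ≠ ⟨GPath.cons e q.1 h, q.2⟩ := by
        intro hcon
        apply hpq
        apply Subtype.ext
        have h2 : (GPath.cons e q.1 h).tail = q.1 := GPath.ext' rfl rfl
        exact (congrArg (fun g : GPath s r => g.tail)
          (congrArg Subtype.val hcon)).trans h2
      rw [lp.single_apply_ne _ _ _ hpq, lp.single_apply_ne _ _ _ hne]
  · rw [if_neg hpe]
    have hne : p ≠ ⟨GPath.cons e q.1 h, q.2⟩ := by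
      intro hcon
      apply hpe
      have hedge : p.1.edges = e :: q.1.edges :=
        congrArg GPath.edges (congrArg Subtype.val hcon)
      rw [hedge]; rfl
    rw [lp.single_apply_ne _ _ _ hne]
    rfl

theorem adjoint_modelS_apply (e : E) (x : HGv s r v) (q : SPath s r v)
    (h : s e = q.1.rng) :
    (ContinuousLinearMap.adjoint (modelS s r v e) x) q
      = x ⟨GPath.cons e q.1 h, q.2⟩ := by
  rw [← inner_xi_left, ContinuousLinearMap.adjoint_inner_right, modelS_xi e q h,
    inner_xi_left]

theorem SSstar_apply (e : E) (y : HGv s r v) (p : SPath s r v) :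
    (modelS s r v e (ContinuousLinearMap.adjoint (modelS s r v e) y)) p
      = if p.1.edges.head? = some e then y p else 0 := by
  show pullFun (decodeS v e) _ p = _
  unfold pullFun decodeS
  by_cases hpe : p.1.edges.head? = some e
  · rw [if_pos hpe, if_pos hpe]
    simp only [Option.map_some, Option.getD_some]
    rw [adjoint_modelS_apply e y ⟨p.1.tail, p.2⟩ (GPath.head_compat p.1 hpe)]
    exact congrArg (⇑y) (Subtype.ext (GPath.cons_tail p.1 hpe (GPath.head_compat p.1 hpe)))
  · rw [if_neg hpe, if_neg hpe]
    rfl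

/-- The zero-length path at `v`, as an element of `SPath s r v`. -/
def nilp (s : E → V) (r : E → V) (v : V) : SPath s r v := ⟨GPath.nil s r v, rfl⟩

theorem eq_nilp_of_edges_nil {p : SPath s r v} (hp : p.1.edges = []) :
    p = nilp s r v := by
  apply Subtype.ext
  exact GPath.ext' p.2 hp

/-- Restriction decoding map: keep only nonempty paths whose first edge avoids `F`. -/
def decodeF (v : V) (F : Finset E) (p : SPath s r v) : Option (SPath s r v) :=
  if p.1.edges = [] ∨ ∃ e ∈ F, p.1.edges.head? = some e then none else some p

theorem decodeF_inj (v : V) (F : Finset E) :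
    ∀ ⦃k k' : SPath s r v⦄ ⦃i : SPath s r v⦄,
      decodeF v F k = some i → decodeF v F k' = some i → k = k' := by
  intro k k' i h1 h2
  unfold decodeF at h1 h2
  split_ifs at h1 h2 <;> simp_all

theorem lp_coeFn_sum {ι : Type*} (F : Finset ι) (f : ι → HGv s r v)
    (p : SPath s r v) : (∑ i ∈ F, f i) p = ∑ i ∈ F, f i p := by
  classical
  induction F using Finset.induction_on with
  | empty => simp [lp.coeFn_zero]
  | insert _ _ hn ih =>
    rw [Finset.sum_insert hn, Finset.sum_insert hn, ← ih, lp.coeFn_add, Pi.add_apply]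

theorem key_identity (F : Finset E) (y : HGv s r v) :
    y - (∑ e ∈ F, modelS s r v e (ContinuousLinearMap.adjoint (modelS s r v e) y))
        - y (nilp s r v) • xi (nilp s r v)
      = pullCLM (decodeF v F) (decodeF_inj v F) y := by
  apply lp.ext; funext p
  have hL : (y - (∑ e ∈ F, modelS s r v e (ContinuousLinearMap.adjoint (modelS s r v e) y))
      - y (nilp s r v) • xi (nilp s r v)) p
      = y p - (∑ e ∈ F, (modelS s r v e (ContinuousLinearMap.adjoint (modelS s r v e) y)) p)
        - y (nilp s r v) * xi (nilp s r v) p := by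
    rw [lp.coeFn_sub, Pi.sub_apply, lp.coeFn_sub, Pi.sub_apply, lp.coeFn_smul, Pi.smul_apply,
      lp_coeFn_sum]
    rfl
  rw [hL, pullCLM_apply]
  unfold pullFun decodeF
  by_cases h1 : p.1.edges = []
  · have hpn : p = nilp s r v := eq_nilp_of_edges_nil h1
    have hsum : (∑ e ∈ F, (modelS s r v e (ContinuousLinearMap.adjoint (modelS s r v e) y)) p)
        = 0 := by
      apply Finset.sum_eq_zero
      intro e _
      rw [SSstar_apply, if_neg]
      rw [h1]; simp
    rw [hsum, if_pos (Or.inl h1), hpn]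
    rw [xi, lp.single_apply_self]
    simp
  · have hxin : xi (nilp s r v) p = 0 := by
      apply lp.single_apply_ne
      intro hcon
      exact h1 (by rw [hcon]; rfl)
    by_cases h2 : ∃ e ∈ F, p.1.edges.head? = some e
    · obtain ⟨e0, he0F, he0⟩ := h2
      have hsum : (∑ e ∈ F, (modelS s r v e (ContinuousLinearMap.adjoint (modelS s r v e) y)) p)
          = y p := by
        rw [Finset.sum_eq_single e0]
        · rw [SSstar_apply, if_pos he0]
        · intro e heF hne
          rw [SSstar_apply, if_neg]
          rw [he0]
          simp [hne.symm]
        · intro hcon; exact absurd he0F hcon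
      rw [hsum, if_pos (Or.inr ⟨e0, he0F, he0⟩), hxin]
      simp
    · have hsum : (∑ e ∈ F, (modelS s r v e (ContinuousLinearMap.adjoint (modelS s r v e) y)) p)
          = 0 := by
        apply Finset.sum_eq_zero
        intro e heF
        rw [SSstar_apply, if_neg]
        intro hcon
        exact h2 ⟨e, heF, hcon⟩
      rw [hsum, if_neg (by push_neg; exact ⟨h1, by push_neg at h2; exact h2⟩)]
      simp [hxin]

theorem pullCLM_decodeF_single (F : Finset E) (q : SPath s r v)
    (hq : decodeF (s := s) (r := r) v F q = none) (a : ℂ) :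
    pullCLM (decodeF v F) (decodeF_inj v F) (lp.single 2 q a) = 0 := by
  apply lp.ext; funext p
  rw [pullCLM_apply, lp.coeFn_zero]
  unfold pullFun decodeF
  by_cases h : p.1.edges = [] ∨ ∃ e ∈ F, p.1.edges.head? = some e
  · rw [if_pos h]; rfl
  · rw [if_neg h]
    simp only [Option.map_some, Option.getD_some, Pi.zero_apply]
    apply lp.single_apply_ne
    intro hcon
    unfold decodeF at hq
    rw [← hcon, if_neg h] at hq
    exact Option.some_ne_none p hq

end Aux

/-- The model TCK family `(P^v, S^v)` on `H_{G,v}` is irreducible: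
the only closed subspaces of `H_{G,v}` invariant under every `P^v_w`, `S^v_e` and their
adjoints are `{0}` and `H_{G,v}`. -/
theorem statement_3 {V E : Type*} [Countable V] [Countable E] (s r : E → V) (v : V)
    (K : Submodule ℂ (HGv s r v)) (hK : IsClosed (K : Set (HGv s r v)))
    (hP : ∀ w : V, ∀ x ∈ K, modelP s r v w x ∈ K ∧
      ContinuousLinearMap.adjoint (modelP s r v w) x ∈ K)
    (hS : ∀ e : E, ∀ x ∈ K, modelS s r v e x ∈ K ∧
      ContinuousLinearMap.adjoint (modelS s r v e) x ∈ K) :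
    K = ⊥ ∨ K = ⊤ := by
  by_cases hbot : K = ⊥
  · exact Or.inl hbot
  right
  -- Step 1: find `y ∈ K` with nonzero coordinate at the zero-length path.
  obtain ⟨x, hxK, hx0⟩ := (Submodule.ne_bot_iff K).mp hbot
  have hcoord : ∃ p : SPath s r v, x p ≠ 0 := by
    by_contra hcon
    push_neg at hcon
    exact hx0 (lp.ext (funext fun p => hcon p))
  obtain ⟨p0, hp0⟩ := hcoord
  have hstrip : ∀ (l : List E) (x : HGv s r v) (p : SPath s r v), x ∈ K →
      p.1.edges = l → x p ≠ 0 → ∃ z ∈ K, z (nilp s r v) ≠ 0 := by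
    intro l
    induction l with
    | nil =>
      intro x p hxK hpl hxp
      exact ⟨x, hxK, by rwa [← eq_nilp_of_edges_nil hpl]⟩
    | cons e t ih =>
      intro x p hxK hpl hxp
      have he : p.1.edges.head? = some e := by rw [hpl]; rfl
      have hc := GPath.head_compat p.1 he
      have hx'K : ContinuousLinearMap.adjoint (modelS s r v e) x ∈ K := (hS e x hxK).2
      have htail : ((⟨p.1.tail, p.2⟩ : SPath s r v)).1.edges = t := by
        simp [GPath.tail, hpl]
      refine ih (ContinuousLinearMap.adjoint (modelS s r v e) x) ⟨p.1.tail, p.2⟩ hx'K htail ?_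
      rw [adjoint_modelS_apply e x ⟨p.1.tail, p.2⟩ hc]
      rwa [show (⟨GPath.cons e p.1.tail hc, p.2⟩ : SPath s r v) = p from
        Subtype.ext (GPath.cons_tail p.1 he hc)]
  obtain ⟨y, hyK, hy0⟩ := hstrip p0.1.edges x p0 hxK rfl hp0
  -- Step 2: `xi (nilp) ∈ K` by an approximation argument.
  have hnilK : xi (nilp s r v) ∈ K := by
    have htgt : y (nilp s r v) • xi (nilp s r v) ∈ K := by
      have hcl : y (nilp s r v) • xi (nilp s r v) ∈ closure (K : Set (HGv s r v)) := by
        rw [Metric.mem_closure_iff]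
        intro ε hε
        have hsum := lp.hasSum_single ENNReal.ofNat_ne_top y
        rw [HasSum] at hsum
        have := (Metric.tendsto_nhds.mp hsum) ε hε
        obtain ⟨G, hG⟩ := this.exists
        set F : Finset E := G.biUnion (fun q => q.1.edges.head?.toFinset) with hF
        set k : HGv s r v :=
          y - (∑ e ∈ F, modelS s r v e (ContinuousLinearMap.adjoint (modelS s r v e) y))
          with hk
        have hkK : k ∈ K := by
          apply Submodule.sub_mem _ hyK
          apply Submodule.sum_mem
          intro e _
          exact (hS e _ ((hS e y hyK).2)).1
        refine ⟨k, hkK, ?_⟩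
        have hkey : k - y (nilp s r v) • xi (nilp s r v)
            = pullCLM (decodeF v F) (decodeF_inj v F) y := key_identity F y
        set z : HGv s r v := ∑ q ∈ G, lp.single 2 q (y q) with hz
        have hRz : pullCLM (decodeF v F) (decodeF_inj v F) z = 0 := by
          rw [hz, map_sum]
          apply Finset.sum_eq_zero
          intro q hqG
          apply pullCLM_decodeF_single
          unfold decodeF
          by_cases hq1 : q.1.edges = []
          · rw [if_pos (Or.inl hq1)]
          · rcases hq2 : q.1.edges.head? with - | e
            · exact absurd (List.head?_eq_none_iff.mp hq2) hq1
            · have hmem : e ∈ F := by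
                rw [hF]
                exact Finset.mem_biUnion.mpr ⟨q, hqG, by rw [hq2]; simp⟩
              rw [if_pos (Or.inr ⟨e, hmem, rfl⟩)]
        have hRyz : pullCLM (decodeF v F) (decodeF_inj v F) y
            = pullCLM (decodeF v F) (decodeF_inj v F) (y - z) := by
          rw [map_sub, hRz, sub_zero]
        have hdist : dist (y (nilp s r v) • xi (nilp s r v)) k < ε := by
          rw [dist_eq_norm, ← neg_sub, norm_neg, hkey, hRyz]
          calc ‖pullCLM (decodeF v F) (decodeF_inj v F) (y - z)‖ ≤ ‖y - z‖ :=
                pullCLM_norm_le _ _ _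
            _ < ε := by
                have := hG
                rwa [dist_eq_norm, norm_sub_rev] at this
        exact hdist
      rwa [hK.closure_eq, SetLike.mem_coe] at hcl
    have := Submodule.smul_mem K (y (nilp s r v))⁻¹ htgt
    rwa [smul_smul, inv_mul_cancel₀ hy0, one_smul] at this
  -- Step 3: every basis vector lies in `K`.
  have hxiK : ∀ p : SPath s r v, xi p ∈ K := by
    have : ∀ (l : List E) (p : SPath s r v), p.1.edges = l → xi p ∈ K := by
      intro l
      induction l with
      | nil =>
        intro p hpl
        rw [eq_nilp_of_edges_nil hpl]
        exact hnilK
      | cons e t ih =>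
        intro p hpl
        have he : p.1.edges.head? = some e := by rw [hpl]; rfl
        have hc := GPath.head_compat p.1 he
        have htail : ((⟨p.1.tail, p.2⟩ : SPath s r v)).1.edges = t := by
          simp [GPath.tail, hpl]
        have h1 := (hS e _ (ih ⟨p.1.tail, p.2⟩ htail)).1
        rwa [modelS_xi e ⟨p.1.tail, p.2⟩ hc,
          show (⟨GPath.cons e p.1.tail hc, p.2⟩ : SPath s r v) = p from
            Subtype.ext (GPath.cons_tail p.1 he hc)] at h1
    exact fun p => this p.1.edges p rfl
  -- Step 4: conclude `K = ⊤` via orthogonal complements.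
  haveI : CompleteSpace K := hK.completeSpace_coe
  rw [← Submodule.orthogonal_eq_bot_iff]
  rw [Submodule.eq_bot_iff]
  intro z hz
  apply lp.ext
  funext q
  have := (Submodule.mem_orthogonal K z).mp hz (xi q) (hxiK q)
  rw [inner_xi_left] at this
  exact this

end GraphPaper
end
end

section
/- Let G = (V, E, s, r) be a countable directed graph and (Q, T) a TCK family for G on a complex Hilbert space H. Let v, w ∈ V and let ζ, η ∈ H satisfy Q_v ζ = ζ, T_e* ζ = 0 for every e ∈ r⁻¹(v), Q_w η = η, and T_e* η = 0 for every e ∈ r⁻¹(w). Let λ and μ be finite paths in G with s(λ) = v and s(μ) = w. If λ ≠ μ then ⟨T_λ ζ, T_μ η⟩ = 0; moreover ⟨T_λ ζ, T_λ η⟩ = ⟨ζ, η⟩. -/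
noncomputable section

open scoped ENNReal InnerProductSpace ComplexOrder
open ContinuousLinearMap

attribute [local instance] Classical.propDecidable

namespace GraphPaper

section Statement5Aux

variable {V E : Type*}
  {H : Type*} [NormedAddCommGroup H] [InnerProductSpace ℂ H] [CompleteSpace H]
  {s r : E → V} {Q : V → H →L[ℂ] H} {T : E → H →L[ℂ] H}

local notation "⟪" x ", " y "⟫" => @inner ℂ _ _ x y

lemma inner_Q_move (h : IsTCK s r Q T) (u : V) (x y : H) :
    ⟪Q u x, y⟫ = ⟪x, Q u y⟫ := by
  conv_lhs => rw [← h.1 u]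
  exact adjoint_inner_left _ _ _

lemma QQ_apply (h : IsTCK s r Q T) (u : V) (x : H) : Q u (Q u x) = Q u x := by
  have h2 := h.2.1 u
  calc Q u (Q u x) = (Q u ∘L Q u) x := rfl
    _ = Q u x := by rw [h2]

lemma eq_zero_of_nonneg_neg_normsq {a : H} (hpos : (0:ℂ) ≤ -((‖a‖ : ℂ) ^ 2)) :
    a = 0 := by
  have h1 : ((‖a‖ : ℂ) ^ 2) ≤ 0 := neg_nonneg.mp hpos
  have h2 : ((‖a‖ ^ 2 : ℝ) : ℂ) ≤ ((0 : ℝ) : ℂ) := by push_cast; exact h1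
  have h3 : (‖a‖ ^ 2 : ℝ) ≤ 0 := by exact_mod_cast h2
  have h4 : ‖a‖ = 0 := by nlinarith [norm_nonneg a]
  exact norm_eq_zero.mp h4

/-- `T_e* = T_e* Q_{r e}`. -/
lemma adjT_comp_Q (h : IsTCK s r Q T) (e : E) :
    adjoint (T e) ∘L Q (r e) = adjoint (T e) := by
  have key : ∀ z : H, adjoint (T e) (z - Q (r e) z) = 0 := by
    intro z
    have hpos := h.2.2.2.2 (r e) {e} (by simp) (z - Q (r e) z)
    set x := z - Q (r e) z with hx
    have hQx : Q (r e) x = 0 := by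
      rw [hx, map_sub, QQ_apply h, sub_self]
    have hval : ⟪(Q (r e) - ∑ e' ∈ ({e} : Finset E), T e' ∘L adjoint (T e')) x, x⟫
        = -((‖adjoint (T e) x‖ : ℂ) ^ 2) := by
      rw [Finset.sum_singleton]
      rw [ContinuousLinearMap.sub_apply, ContinuousLinearMap.comp_apply, hQx, zero_sub,
        inner_neg_left]
      congr 1
      rw [← ContinuousLinearMap.adjoint_inner_right (T e), inner_self_eq_norm_sq_to_K]
      norm_cast
    rw [hval] at hpos
    exact eq_zero_of_nonneg_neg_normsq hpos
  ext z
  have := key z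
  rw [map_sub, sub_eq_zero] at this
  simpa using this.symm

/-- `Q_{r e} T_e = T_e`. -/
lemma Q_comp_T (h : IsTCK s r Q T) (e : E) : Q (r e) ∘L T e = T e := by
  have := congrArg adjoint (adjT_comp_Q h e)
  rwa [adjoint_comp, adjoint_adjoint, h.1] at this

/-- `T_e Q_{s e} = T_e`. -/
lemma T_comp_Qs (h : IsTCK s r Q T) (e : E) : T e ∘L Q (s e) = T e := by
  ext y
  have hnorm : ⟪T e (Q (s e) y) - T e y, T e (Q (s e) y) - T e y⟫ = 0 := by
    have h1 : T e (Q (s e) y) - T e y = T e (Q (s e) y - y) := by rw [map_sub]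
    rw [h1, ← ContinuousLinearMap.adjoint_inner_right (T e)]
    have h2 : adjoint (T e) (T e (Q (s e) y - y)) = Q (s e) (Q (s e) y - y) := by
      have := h.2.2.2.1 e
      calc adjoint (T e) (T e (Q (s e) y - y))
          = (adjoint (T e) ∘L T e) (Q (s e) y - y) := rfl
        _ = Q (s e) (Q (s e) y - y) := by rw [this]
    rw [h2, map_sub, QQ_apply h, sub_self, inner_zero_right]
  have := inner_self_eq_zero.mp hnorm
  rw [sub_eq_zero] at this
  simpa using this

/-- `T_e* T_f = 0` for distinct edges. -/
lemma adjT_comp_T (h : IsTCK s r Q T) {e f : E} (hef : e ≠ f) :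
    adjoint (T e) ∘L T f = 0 := by
  by_cases hre : r e = r f
  · -- same range: use positivity with F = {e, f}
    ext y
    have hpos := h.2.2.2.2 (r e) {e, f} (by
      intro e' he'
      rcases Finset.mem_insert.mp he' with h1 | h1
      · rw [h1]
      · rw [Finset.mem_singleton.mp h1, hre]) (T f y)
    have hsum : (∑ e' ∈ ({e, f} : Finset E), T e' ∘L adjoint (T e'))
        = T e ∘L adjoint (T e) + T f ∘L adjoint (T f) := Finset.sum_pair hef
    have hQTf : Q (r e) (T f y) = T f y := by
      have := Q_comp_T h f
      rw [hre]
      calc Q (r f) (T f y) = (Q (r f) ∘L T f) y := rfl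
        _ = T f y := by rw [this]
    have hTfTf : T f (adjoint (T f) (T f y)) = T f y := by
      have h1 : adjoint (T f) (T f y) = Q (s f) y := by
        have := h.2.2.2.1 f
        calc adjoint (T f) (T f y) = (adjoint (T f) ∘L T f) y := rfl
          _ = Q (s f) y := by rw [this]
      rw [h1]
      have := T_comp_Qs h f
      calc T f (Q (s f) y) = (T f ∘L Q (s f)) y := rfl
        _ = T f y := by rw [this]
    have hval : ⟪(Q (r e) - ∑ e' ∈ ({e, f} : Finset E), T e' ∘L adjoint (T e')) (T f y),
        T f y⟫ = -((‖adjoint (T e) (T f y)‖ : ℂ) ^ 2) := by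
      rw [hsum]
      rw [ContinuousLinearMap.sub_apply, ContinuousLinearMap.add_apply,
        ContinuousLinearMap.comp_apply, ContinuousLinearMap.comp_apply, hQTf, hTfTf]
      have : T f y - (T e (adjoint (T e) (T f y)) + T f y)
          = -(T e (adjoint (T e) (T f y))) := by abel
      rw [this, inner_neg_left]
      congr 1
      rw [← ContinuousLinearMap.adjoint_inner_right (T e), inner_self_eq_norm_sq_to_K]
      norm_cast
    rw [hval] at hpos
    simpa using eq_zero_of_nonneg_neg_normsq hpos
  · -- different ranges: kill via orthogonal projections
    ext y
    have h1 : adjoint (T e) (T f y) = adjoint (T e) (Q (r e) (T f y)) := by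
      have := adjT_comp_Q h e
      calc adjoint (T e) (T f y) = (adjoint (T e) ∘L Q (r e)) (T f y) := by rw [this]
        _ = adjoint (T e) (Q (r e) (T f y)) := rfl
    have h2 : T f y = Q (r f) (T f y) := by
      have := Q_comp_T h f
      calc T f y = (Q (r f) ∘L T f) y := by rw [this]
        _ = Q (r f) (T f y) := rfl
    have h3 : Q (r e) (Q (r f) (T f y)) = 0 := by
      have := h.2.2.1 (r e) (r f) hre
      calc Q (r e) (Q (r f) (T f y)) = (Q (r e) ∘L Q (r f)) (T f y) := rfl
        _ = 0 := by rw [this]; rfl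
    simp only [ContinuousLinearMap.comp_apply, ContinuousLinearMap.zero_apply]
    rw [h1, h2, h3, map_zero]

/-- A wandering vector is killed by all adjoints `T_e*`. -/
lemma wandering_adj_zero (h : IsTCK s r Q T) {v : V} {ζ : H}
    (hζ1 : Q v ζ = ζ) (hζ2 : ∀ e : E, r e = v → adjoint (T e) ζ = 0) (e : E) :
    adjoint (T e) ζ = 0 := by
  by_cases hre : r e = v
  · exact hζ2 e hre
  · have h1 : adjoint (T e) ζ = adjoint (T e) (Q (r e) ζ) := by
      have := adjT_comp_Q h e
      calc adjoint (T e) ζ = (adjoint (T e) ∘L Q (r e)) ζ := by rw [this]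
        _ = adjoint (T e) (Q (r e) ζ) := rfl
    have h2 : Q (r e) ζ = 0 := by
      have h3 := h.2.2.1 (r e) v hre
      calc Q (r e) ζ = Q (r e) (Q v ζ) := by rw [hζ1]
        _ = (Q (r e) ∘L Q v) ζ := rfl
        _ = 0 := by rw [h3]; rfl
    rw [h1, h2, map_zero]

/-- The range projection fixes the vector obtained by applying a path of edges to a
wandering vector. -/
lemma prod_fix (h : IsTCK s r Q T) {v : V} {ζ : H} (hζ1 : Q v ζ = ζ) :
    ∀ (l : List E), (∀ e ∈ l.getLast?, s e = v) →
      Q (((l.head?).map r).getD v) ((l.map T).prod ζ) = (l.map T).prod ζ := by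
  intro l hsrc
  match l with
  | [] => simpa using hζ1
  | e :: l' =>
    simp only [List.head?_cons, Option.map_some, Option.getD_some, List.map_cons,
      List.prod_cons, ContinuousLinearMap.mul_apply]
    have := Q_comp_T h e
    calc Q (r e) (T e ((l'.map T).prod ζ)) = (Q (r e) ∘L T e) ((l'.map T).prod ζ) := rfl
      _ = T e ((l'.map T).prod ζ) := by rw [this]

/-- Diagonal inner products. -/
lemma diag_inner (h : IsTCK s r Q T) {v : V} {ζ : H} (hζ1 : Q v ζ = ζ) (η : H) :
    ∀ (l : List E), l.Chain' (fun e f => s e = r f) → (∀ e ∈ l.getLast?, s e = v) →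
      ⟪(l.map T).prod ζ, (l.map T).prod η⟫ = ⟪ζ, η⟫ := by
  intro l
  induction l with
  | nil => intro _ _; simp
  | cons e l' ih =>
    intro hc hsrc
    obtain ⟨hhead, hc'⟩ := List.isChain_cons.mp hc
    have hsrc' : ∀ e' ∈ l'.getLast?, s e' = v := by
      intro e' he'
      apply hsrc
      cases l' with
      | nil => simp at he'
      | cons f t => rw [List.getLast?_cons_cons]; exact he'
    simp only [List.map_cons, List.prod_cons, ContinuousLinearMap.mul_apply]
    set x := (l'.map T).prod ζ with hx
    set y := (l'.map T).prod η with hy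
    have h1 : ⟪T e x, T e y⟫ = ⟪x, Q (s e) y⟫ := by
      rw [← ContinuousLinearMap.adjoint_inner_right (T e)]
      congr 1
      have := h.2.2.2.1 e
      calc adjoint (T e) (T e y) = (adjoint (T e) ∘L T e) y := rfl
        _ = Q (s e) y := by rw [this]
    have hmatch : s e = ((l'.head?).map r).getD v := by
      cases l' with
      | nil => simpa using hsrc e (by simp)
      | cons f t => simpa using hhead f (by simp)
    have h2 : Q (s e) x = x := by
      rw [hmatch, hx]; exact prod_fix h hζ1 l' hsrc'
    rw [h1, ← inner_Q_move h, h2]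
    exact ih hc' hsrc'

/-- Off-diagonal inner products vanish. -/
lemma offdiag_inner (h : IsTCK s r Q T) {v w : V} {ζ η : H}
    (hζ1 : Q v ζ = ζ) (hζ2 : ∀ e : E, r e = v → adjoint (T e) ζ = 0)
    (hη1 : Q w η = η) (hη2 : ∀ e : E, r e = w → adjoint (T e) η = 0) :
    ∀ (l m : List E), l.Chain' (fun e f => s e = r f) →
      (∀ e ∈ l.getLast?, s e = v) → (∀ e ∈ m.getLast?, s e = w) → l ≠ m →
      ⟪(l.map T).prod ζ, (m.map T).prod η⟫ = 0 := by
  intro l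
  induction l with
  | nil =>
    intro m _ _ hm hne
    cases m with
    | nil => exact absurd rfl hne
    | cons f m' =>
      simp only [List.map_nil, List.prod_nil, ContinuousLinearMap.one_apply,
        List.map_cons, List.prod_cons, ContinuousLinearMap.mul_apply]
      rw [← ContinuousLinearMap.adjoint_inner_left (T f)]
      rw [wandering_adj_zero h hζ1 hζ2 f, inner_zero_left]
  | cons e l' ih =>
    intro m hc hsrc hm hne
    obtain ⟨hhead, hc'⟩ := List.isChain_cons.mp hc
    have hsrc' : ∀ e' ∈ l'.getLast?, s e' = v := by
      intro e' he'
      apply hsrc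
      cases l' with
      | nil => simp at he'
      | cons f t => rw [List.getLast?_cons_cons]; exact he'
    cases m with
    | nil =>
      simp only [List.map_nil, List.prod_nil, ContinuousLinearMap.one_apply,
        List.map_cons, List.prod_cons, ContinuousLinearMap.mul_apply]
      rw [← ContinuousLinearMap.adjoint_inner_right (T e)]
      rw [wandering_adj_zero h hη1 hη2 e, inner_zero_right]
    | cons f m' =>
      have hm' : ∀ e' ∈ m'.getLast?, s e' = w := by
        intro e' he'
        apply hm
        cases m' with
        | nil => simp at he'
        | cons g t => rw [List.getLast?_cons_cons]; exact he'
      simp only [List.map_cons, List.prod_cons, ContinuousLinearMap.mul_apply]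
      by_cases hef : e = f
      · subst hef
        have hne' : l' ≠ m' := fun hh => hne (by rw [hh])
        set x := (l'.map T).prod ζ with hx
        set y := (m'.map T).prod η with hy
        have h1 : ⟪T e x, T e y⟫ = ⟪x, Q (s e) y⟫ := by
          rw [← ContinuousLinearMap.adjoint_inner_right (T e)]
          congr 1
          have := h.2.2.2.1 e
          calc adjoint (T e) (T e y) = (adjoint (T e) ∘L T e) y := rfl
            _ = Q (s e) y := by rw [this]
        have hmatch : s e = ((l'.head?).map r).getD v := by
          cases l' with
          | nil => simpa using hsrc e (by simp)
          | cons g t => simpa using hhead g (by simp)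
        have h2 : Q (s e) x = x := by
          rw [hmatch, hx]; exact prod_fix h hζ1 l' hsrc'
        rw [h1, ← inner_Q_move h, h2]
        exact ih m' hc' hsrc' hm' hne'
      · rw [← ContinuousLinearMap.adjoint_inner_right (T e)]
        have h0 : adjoint (T e) (T f ((m'.map T).prod η)) = 0 := by
          have := adjT_comp_T h hef
          calc adjoint (T e) (T f ((m'.map T).prod η))
              = (adjoint (T e) ∘L T f) ((m'.map T).prod η) := rfl
            _ = 0 := by rw [this]; rfl
        rw [h0, inner_zero_right]

/-- `pathOp` applied to a wandering vector agrees with the bare product of the edge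
operators. -/
lemma pathOp_apply_wandering {v : V} {ζ : H} (hζ1 : Q v ζ = ζ)
    (p : GPath s r) (hp : p.src = v) :
    pathOp Q T p ζ = ((p.edges.map T).prod) ζ := by
  unfold pathOp
  split_ifs with hemp
  · rw [List.isEmpty_iff] at hemp
    rw [hemp, hp]
    simpa using hζ1
  · rfl

end Statement5Aux

/-- If `ζ` and `η` are wandering vectors at vertices `v` and `w` for a
TCK family `(Q, T)`, and `λ, μ` are finite paths with `s(λ) = v` and `s(μ) = w`, then
`⟨T_λ ζ, T_μ η⟩ = 0` whenever `λ ≠ μ`, and `⟨T_λ ζ, T_λ η⟩ = ⟨ζ, η⟩`. -/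
theorem statement_5 {V E : Type*} [Countable V] [Countable E]
    {H : Type*} [NormedAddCommGroup H] [InnerProductSpace ℂ H] [CompleteSpace H]
    (s r : E → V) (Q : V → H →L[ℂ] H) (T : E → H →L[ℂ] H) (hQT : IsTCK s r Q T)
    (v w : V) (ζ η : H)
    (hζ1 : Q v ζ = ζ) (hζ2 : ∀ e : E, r e = v → ContinuousLinearMap.adjoint (T e) ζ = 0)
    (hη1 : Q w η = η) (hη2 : ∀ e : E, r e = w → ContinuousLinearMap.adjoint (T e) η = 0)
    (lam mu : GPath s r) (hlam : lam.src = v) (hmu : mu.src = w) :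
    (lam ≠ mu → (inner ℂ (pathOp Q T lam ζ) (pathOp Q T mu η) : ℂ) = 0) ∧
      (inner ℂ (pathOp Q T lam ζ) (pathOp Q T lam η) : ℂ) = inner ℂ ζ η := by
  have hlsrc : ∀ e ∈ lam.edges.getLast?, s e = v := fun e he => (lam.src_eq e he).trans hlam
  have hmsrc : ∀ e ∈ mu.edges.getLast?, s e = w := fun e he => (mu.src_eq e he).trans hmu
  constructor
  · intro hne
    by_cases hl : lam.edges = mu.edges
    · -- equal edge lists: both must be empty, and then `v ≠ w`
      have hemp : lam.edges = [] := by
        by_contra hnil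
        apply hne
        apply GPath.ext' _ hl
        have hsome : lam.edges.getLast?.isSome := by
          rw [List.getLast?_isSome]; exact hnil
        obtain ⟨g, hg⟩ := Option.isSome_iff_exists.mp hsome
        have hgl : g ∈ lam.edges.getLast? := by rw [hg]; rfl
        have hgm : g ∈ mu.edges.getLast? := by rw [← hl, hg]; rfl
        rw [← lam.src_eq g hgl, ← mu.src_eq g hgm]
      have hemp' : mu.edges = [] := hl ▸ hemp
      have hvw : v ≠ w := by
        intro hvw
        exact hne (GPath.ext' (by rw [hlam, hmu, hvw]) hl)
      have e1 : pathOp Q T lam ζ = ζ := by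
        unfold pathOp
        rw [if_pos (by rw [List.isEmpty_iff]; exact hemp), hlam, hζ1]
      have e2 : pathOp Q T mu η = η := by
        unfold pathOp
        rw [if_pos (by rw [List.isEmpty_iff]; exact hemp'), hmu, hη1]
      rw [e1, e2]
      have hQvQw : Q v (Q w η) = 0 := by
        have h3 := hQT.2.2.1 v w hvw
        calc Q v (Q w η) = (Q v ∘L Q w) η := rfl
          _ = 0 := by rw [h3]; rfl
      calc (inner ℂ ζ η : ℂ) = inner ℂ (Q v ζ) η := by rw [hζ1]
        _ = inner ℂ ζ (Q v η) := inner_Q_move hQT v ζ η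
        _ = inner ℂ ζ (Q v (Q w η)) := by rw [hη1]
        _ = 0 := by rw [hQvQw, inner_zero_right]
    · rw [pathOp_apply_wandering hζ1 lam hlam, pathOp_apply_wandering hη1 mu hmu]
      exact offdiag_inner hQT hζ1 hζ2 hη1 hη2 lam.edges mu.edges lam.chain hlsrc hmsrc hl
  · by_cases hemp : lam.edges = []
    · have e1 : pathOp Q T lam ζ = ζ := by
        unfold pathOp
        rw [if_pos (by rw [List.isEmpty_iff]; exact hemp), hlam, hζ1]
      have e2 : pathOp Q T lam η = Q v η := by
        unfold pathOp
        rw [if_pos (by rw [List.isEmpty_iff]; exact hemp), hlam]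
      rw [e1, e2, ← inner_Q_move hQT v, hζ1]
    · rw [pathOp_apply_wandering hζ1 lam hlam]
      have e2 : pathOp Q T lam η = (lam.edges.map T).prod η := by
        unfold pathOp
        rw [if_neg (by rw [List.isEmpty_iff]; exact hemp)]
      rw [e2]
      exact diag_inner hQT hζ1 η lam.edges lam.chain hlsrc

end GraphPaper
end
end

section
/- Let I be an index set, V a countable type, and for each i ∈ I let G_i = (V, E_i, s_i, r_i) be a countable directed graph on the common vertex set V. Let (P, (S^{(i)})_{i ∈ I}) be an I-colored TCK family on a complex Hilbert space H. Then there exists a largest closed subspace K of H that is invariant under every P_v, S^{(i)}_e and their adjoints (reducing) and such that the restricted family (P|_K, (S^{(i)}|_K)) is a full CK I-colored family; that is, K (possibly {0}) has these properties, and every closed subspace L of H reducing for all the operators whose restricted family is a full CK I-colored family satisfies L ⊆ K. -/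
noncomputable section

open scoped ENNReal InnerProductSpace ComplexOrder
open ContinuousLinearMap

attribute [local instance] Classical.propDecidable

namespace GraphPaper

/-! ### Colored graphs -/

section Colored

universe uH

variable {I V : Type*} {E : I → Type*}
variable {H : Type*} [NormedAddCommGroup H] [InnerProductSpace ℂ H] [CompleteSpace H]

/-- An `I`-colored TCK family: common vertex projections `P` together with, for each
color `i`, operators `S i` such that `(P, S i)` is a TCK family for the graph
`(V, E i, s i, r i)`. -/
def IsColTCK (s r : ∀ i, E i → V) (P : V → H →L[ℂ] H)
    (S : ∀ i, E i → H →L[ℂ] H) : Prop :=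
  ∀ i, IsTCK (s i) (r i) P (S i)

/-- A full CK `I`-colored family. -/
def IsColFullCK (s r : ∀ i, E i → V) (P : V → H →L[ℂ] H)
    (S : ∀ i, E i → H →L[ℂ] H) : Prop :=
  ∀ i, IsFullCK (s i) (r i) P (S i)

/-- The generators of an `I`-colored family, indexed by vertices and colored edges. -/
def cgen (P : V → H →L[ℂ] H) (S : ∀ i, E i → H →L[ℂ] H) :
    V ⊕ (Σ i, E i) → H →L[ℂ] H :=
  Sum.elim P fun p => S p.1 p.2

variable {K : Type*} [NormedAddCommGroup K] [InnerProductSpace ℂ K] [CompleteSpace K]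

/-- `(Q, T)` on `K` dilates the `I`-colored family `(P, S)` on `H` via the isometry
`W : H → K`: compressions of arbitrary nonempty words in the generators agree. -/
def ColDilates (P : V → H →L[ℂ] H) (S : ∀ i, E i → H →L[ℂ] H)
    (Q : V → K →L[ℂ] K) (T : ∀ i, E i → K →L[ℂ] K) (W : H →L[ℂ] K) : Prop :=
  (∀ x : H, ‖W x‖ = ‖x‖) ∧
  ∀ l : List (V ⊕ (Σ i, E i)), l ≠ [] →
    adjoint W ∘L (l.map (cgen Q T)).prod ∘L W = (l.map (cgen P S)).prod

/-- An `I`-colored TCK family is maximal if every `I`-colored TCK dilation of it has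
reducing range. -/
def IsColMax (s r : ∀ i, E i → V) {H : Type uH} [NormedAddCommGroup H]
    [InnerProductSpace ℂ H] [CompleteSpace H]
    (P : V → H →L[ℂ] H) (S : ∀ i, E i → H →L[ℂ] H) : Prop :=
  ∀ (K : Type uH) [NormedAddCommGroup K] [InnerProductSpace ℂ K] [CompleteSpace K],
    ∀ (Q : V → K →L[ℂ] K) (T : ∀ i, E i → K →L[ℂ] K) (W : H →L[ℂ] K),
      IsColTCK s r Q T → ColDilates P S Q T W →
        ∀ (g : V ⊕ (Σ i, E i)) (x : H),
          cgen Q T g (W x) ∈ Set.range W ∧ adjoint (cgen Q T g) (W x) ∈ Set.range W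

end Colored

end GraphPaper

namespace GraphPaper

section Stmt16

variable {I V : Type*} {E : I → Type*}
variable {H : Type*} [NormedAddCommGroup H] [InnerProductSpace ℂ H] [CompleteSpace H]

/-- A subspace is reducing for an `I`-colored family if it is invariant under all the
operators and their adjoints. -/
def ColReduces (P : V → H →L[ℂ] H) (S : ∀ i, E i → H →L[ℂ] H)
    (M : Submodule ℂ H) : Prop :=
  (∀ w : V, ∀ x ∈ M, P w x ∈ M ∧ adjoint (P w) x ∈ M) ∧
  (∀ (i) (e : E i), ∀ x ∈ M, S i e x ∈ M ∧ adjoint (S i e) x ∈ M)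

/-- The restriction of an `I`-colored TCK family to a reducing subspace `M` is a full
CK `I`-colored family (expressed via the action on vectors of `M`). -/
def IsColFullCKOn (s r : ∀ i, E i → V) (P : V → H →L[ℂ] H)
    (S : ∀ i, E i → H →L[ℂ] H) (M : Submodule ℂ H) : Prop :=
  ∀ (i) (v : V), (∃ e : E i, r i e = v) → ∀ x ∈ M,
    HasSum (fun e : {e : E i // r i e = v} => S i e.1 (adjoint (S i e.1) x)) (P v x)


theorem aux_isPosOp_iff (T : H →L[ℂ] H) : IsPosOp T ↔ T.IsPositive := by
  rw [ContinuousLinearMap.isPositive_iff_complex]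
  constructor
  · intro h x
    have := h x
    rw [Complex.le_def] at this
    simp only [Complex.zero_re, Complex.zero_im] at this
    exact ⟨Complex.ext (by simp) (by simp [this.2.symm]), this.1⟩
  · intro h x
    have := h x
    rw [Complex.le_def]
    exact ⟨by simpa using this.2, by simpa using congrArg Complex.im this.1⟩

theorem aux_proj_contraction {T : H →L[ℂ] H} (hsa : adjoint T = T) (hid : T ∘L T = T)
    (x : H) : ‖T x‖ ≤ ‖x‖ := by
  have h1 : (inner ℂ (T x) (T x) : ℂ) = inner ℂ (T x) x := by
    calc (inner ℂ (T x) (T x) : ℂ) = inner ℂ (adjoint T (T x)) x := by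
          rw [ContinuousLinearMap.adjoint_inner_left]
      _ = inner ℂ (T (T x)) x := by rw [hsa]
      _ = inner ℂ (T x) x := by
          have : T (T x) = T x := congrFun (congrArg DFunLike.coe hid) x
          rw [this]
  have h2 : (‖T x‖ : ℝ) ^ 2 = RCLike.re (inner ℂ (T x) x : ℂ) := by
    rw [← h1, ← @inner_self_eq_norm_sq ℂ]
  have h3 : RCLike.re (inner ℂ (T x) x : ℂ) ≤ ‖T x‖ * ‖x‖ := by
    calc RCLike.re (inner ℂ (T x) x : ℂ) ≤ ‖(inner ℂ (T x) x : ℂ)‖ := RCLike.re_le_norm _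
      _ ≤ ‖T x‖ * ‖x‖ := norm_inner_le_norm _ _
  nlinarith [norm_nonneg (T x), norm_nonneg x, h2 ▸ h3]

theorem aux_opNorm_proj_le {T : H →L[ℂ] H} (hsa : adjoint T = T) (hid : T ∘L T = T) :
    ‖T‖ ≤ 1 := by
  refine ContinuousLinearMap.opNorm_le_bound _ zero_le_one fun x => ?_
  simpa using aux_proj_contraction hsa hid x

theorem aux_sum_Se_pos {ι : Type*} (S : ι → H →L[ℂ] H) (F : Finset ι) :
    (0 : H →L[ℂ] H) ≤ ∑ e ∈ F, S e ∘L adjoint (S e) := by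
  rw [ContinuousLinearMap.nonneg_iff_isPositive]
  refine Finset.sum_induction _ _ (fun a b => ContinuousLinearMap.IsPositive.add)
    ContinuousLinearMap.isPositive_zero (fun e _ => ?_)
  simpa using! ContinuousLinearMap.IsPositive.conj_adjoint
    ContinuousLinearMap.isPositive_one (S e)

theorem aux_sum_bound {ι : Type*} {Pv : H →L[ℂ] H} (hsa : adjoint Pv = Pv)
    (hid : Pv ∘L Pv = Pv) (S : ι → H →L[ℂ] H) (F : Finset ι)
    (hpos : IsPosOp (Pv - ∑ e ∈ F, S e ∘L adjoint (S e))) (y : H) :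
    ‖(∑ e ∈ F, S e ∘L adjoint (S e)) y‖ ≤ ‖y‖ := by
  set B := ∑ e ∈ F, S e ∘L adjoint (S e) with hB
  have h0 : (0 : H →L[ℂ] H) ≤ B := aux_sum_Se_pos S F
  have hBP : B ≤ Pv := by
    rw [ContinuousLinearMap.le_def]
    exact (aux_isPosOp_iff _).mp hpos
  have hnorm : ‖B‖ ≤ ‖Pv‖ := CStarAlgebra.norm_le_norm_of_nonneg_of_le h0 hBP
  calc ‖B y‖ ≤ ‖B‖ * ‖y‖ := B.le_opNorm y
    _ ≤ 1 * ‖y‖ := by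
        gcongr
        exact hnorm.trans (aux_opNorm_proj_le hsa hid)
    _ = ‖y‖ := one_mul _

/-- For every `I`-colored TCK family there is a largest closed
reducing subspace on which the restricted family is a full CK `I`-colored family. -/
theorem statement_16 [Countable V] [∀ i, Countable (E i)]
    (s r : ∀ i, E i → V)
    (P : V → H →L[ℂ] H) (S : ∀ i, E i → H →L[ℂ] H) (hPS : IsColTCK s r P S) :
    ∃ K : Submodule ℂ H, IsClosed (K : Set H) ∧ ColReduces P S K ∧
      IsColFullCKOn s r P S K ∧
      ∀ L : Submodule ℂ H, IsClosed (L : Set H) → ColReduces P S L →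
        IsColFullCKOn s r P S L → L ≤ K := by
  classical
  set 𝒮 : Set (Submodule ℂ H) :=
    {L | IsClosed (L : Set H) ∧ ColReduces P S L ∧ IsColFullCKOn s r P S L} with h𝒮
  set K : Submodule ℂ H := (sSup 𝒮).topologicalClosure with hKdef
  have hKset : (K : Set H) = closure ((sSup 𝒮 : Submodule ℂ H) : Set H) := rfl
  have hmapsto : ∀ T : H →L[ℂ] H, (∀ L ∈ 𝒮, ∀ x ∈ L, T x ∈ L) → ∀ x ∈ K, T x ∈ K := by
    intro T hT x hx
    have hmap : Submodule.map (T : H →ₗ[ℂ] H) (sSup 𝒮) ≤ sSup 𝒮 := by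
      conv_lhs => rw [sSup_eq_iSup']
      rw [Submodule.map_iSup]
      refine iSup_le fun L => le_trans ?_ (le_sSup L.2)
      rw [Submodule.map_le_iff_le_comap]
      exact fun y hy => hT L L.2 y hy
    have : T x ∈ closure ((sSup 𝒮 : Submodule ℂ H) : Set H) :=
      map_mem_closure T.continuous hx
        (fun y hy => hmap (Submodule.mem_map_of_mem hy))
    exact this
  refine ⟨K, Submodule.isClosed_topologicalClosure _, ?_, ?_, ?_⟩
  · constructor
    · intro w x hx
      exact ⟨hmapsto (P w) (fun L hL y hy => (hL.2.1.1 w y hy).1) x hx,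
        hmapsto (adjoint (P w)) (fun L hL y hy => (hL.2.1.1 w y hy).2) x hx⟩
    · intro i e x hx
      exact ⟨hmapsto (S i e) (fun L hL y hy => (hL.2.1.2 i e y hy).1) x hx,
        hmapsto (adjoint (S i e)) (fun L hL y hy => (hL.2.1.2 i e y hy).2) x hx⟩
  · intro i v hex x hx
    -- the uniform bound on finite partial sums
    have bnd : ∀ (w : H) (F : Finset {e : E i // r i e = v}),
        ‖∑ e ∈ F, (S i e.1 ∘L adjoint (S i e.1)) w‖ ≤ ‖w‖ := by
      intro w F
      have hcast : ∑ e ∈ F, (S i e.1 ∘L adjoint (S i e.1)) w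
          = (∑ e ∈ F.image Subtype.val, S i e ∘L adjoint (S i e)) w := by
        rw [ContinuousLinearMap.sum_apply,
          Finset.sum_image (fun a _ b _ h => Subtype.val_injective h)]
      rw [hcast]
      refine aux_sum_bound ((hPS i).1 v) ((hPS i).2.1 v) _ _
        ((hPS i).2.2.2.2 v _ ?_) w
      intro e he
      obtain ⟨e', _, rfl⟩ := Finset.mem_image.mp he
      exact e'.2
    -- the set of good vectors is a closed submodule
    let A : Submodule ℂ H :=
      { carrier := {z : H | HasSum
          (fun e : {e : E i // r i e = v} => S i e.1 (adjoint (S i e.1) z)) (P v z)}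
        add_mem' := by
          intro a b ha hb
          simpa [map_add] using ha.add hb
        zero_mem' := by simpa using hasSum_zero
        smul_mem' := by
          intro c a ha
          simpa [map_smul] using ha.const_smul c }
    have key : ∀ z ∈ closure (A : Set H), HasSum
        (fun e : {e : E i // r i e = v} => S i e.1 (adjoint (S i e.1) z)) (P v z) := by
      intro z hz
      rw [HasSum, SummationFilter.unconditional_filter, Metric.tendsto_atTop]
      intro ε hε
      obtain ⟨y, hyA, hyz⟩ := Metric.mem_closure_iff.mp hz (ε / 3) (by positivity)
      have hy : HasSum
          (fun e : {e : E i // r i e = v} => S i e.1 (adjoint (S i e.1) y)) (P v y) := hyA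
      rw [HasSum, SummationFilter.unconditional_filter, Metric.tendsto_atTop] at hy
      obtain ⟨F0, hF0⟩ := hy (ε / 3) (by positivity)
      refine ⟨F0, fun F hF => ?_⟩
      have b1 : dist (∑ e ∈ F, S i e.1 (adjoint (S i e.1) z))
          (∑ e ∈ F, S i e.1 (adjoint (S i e.1) y)) < ε / 3 := by
        rw [dist_eq_norm, ← Finset.sum_sub_distrib]
        have heq : ∀ e : {e : E i // r i e = v},
            S i e.1 (adjoint (S i e.1) z) - S i e.1 (adjoint (S i e.1) y)
              = (S i e.1 ∘L adjoint (S i e.1)) (z - y) := by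
          intro e; simp [map_sub]
        rw [Finset.sum_congr rfl fun e _ => heq e]
        calc ‖∑ e ∈ F, (S i e.1 ∘L adjoint (S i e.1)) (z - y)‖ ≤ ‖z - y‖ := bnd _ F
          _ < ε / 3 := by rwa [← dist_eq_norm]
      have b3 : dist (P v y) (P v z) < ε / 3 := by
        rw [dist_eq_norm, ← map_sub]
        calc ‖P v (y - z)‖ ≤ ‖y - z‖ :=
              aux_proj_contraction ((hPS i).1 v) ((hPS i).2.1 v) _
          _ < ε / 3 := by rwa [← dist_eq_norm, dist_comm]
      calc dist (∑ e ∈ F, S i e.1 (adjoint (S i e.1) z)) (P v z)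
          ≤ dist (∑ e ∈ F, S i e.1 (adjoint (S i e.1) z))
              (∑ e ∈ F, S i e.1 (adjoint (S i e.1) y))
            + dist (∑ e ∈ F, S i e.1 (adjoint (S i e.1) y)) (P v y)
            + dist (P v y) (P v z) := dist_triangle4 _ _ _ _
        _ < ε / 3 + ε / 3 + ε / 3 := by
            have := hF0 F hF
            gcongr
        _ = ε := by ring
    have hsub : ((sSup 𝒮 : Submodule ℂ H) : Set H) ⊆ (A : Set H) := by
      have : sSup 𝒮 ≤ A := sSup_le fun L hL => fun y hy => hL.2.2 i v hex y hy
      exact this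
    exact key x (hKset ▸ hx |> fun h => closure_mono hsub h)
  · intro L hLc hLr hLf
    have hLmem : L ∈ 𝒮 := ⟨hLc, hLr, hLf⟩
    exact le_trans (le_sSup hLmem) (Submodule.le_topologicalClosure _)

end Stmt16

end GraphPaper
end
end
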